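/- For the double integrator ẍ = u with speed constrained to [v_min, v_max], v_min > 0, starting at position α with speed v₀ ≥ v_min, the minimum time t* to reach β > α from initial speed v_min satisfies t* ≥ the minimum time to reach β from any initial speed v₀ ≥ v_min; i.e., the minimum crossing time is antitone in the initial speed. -/

import Mathlib

/-- An admissible double-integrator trajectory with bounded input and speed. -/
def AdmissibleDI (umin umax vmin vmax x0 v0 : ℝ) (x v u : ℝ → ℝ) : Prop :=
  x 0 = x0 ∧ v 0 = v0 ∧
    ∀ t : ℝ, 0 ≤ t → HasDerivAt x (v t) t ∧ HasDerivAt v (u t) t ∧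
      u t ∈ Set.Icc umin umax ∧ v t ∈ Set.Icc vmin vmax

/-- The minimum time for the double integrator to reach β starting from position α
with initial speed w. -/
noncomputable def minCrossTime (umin umax vmin vmax α β w : ℝ) : ℝ :=
  sInf {t : ℝ | 0 ≤ t ∧ ∃ x v u : ℝ → ℝ,
    AdmissibleDI umin umax vmin vmax α w x v u ∧ x t = β}

open Set

lemma key_compare (umin umax vmin vmax α β v0 : ℝ)
    (humin : umin < 0) (humax : 0 < umax) (hvmin : 0 < vmin) (hαβ : α < β)
    (h u : ℝ → ℝ) (hh0 : h 0 = v0)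
    (hderiv : ∀ s : ℝ, HasDerivAt h (u s) s)
    (hu : ∀ s : ℝ, 0 ≤ s → u s ∈ Set.Icc (0:ℝ) umax)
    (hrange : ∀ s : ℝ, 0 ≤ s → h s ∈ Set.Icc vmin vmax)
    (hdom : ∀ s : ℝ, 0 ≤ s → min vmax (vmin + umax * s) ≤ h s)
    (hne : {t : ℝ | 0 ≤ t ∧ ∃ x v u : ℝ → ℝ,
      AdmissibleDI umin umax vmin vmax α vmin x v u ∧ x t = β}.Nonempty) :
    minCrossTime umin umax vmin vmax α β v0 ≤
      minCrossTime umin umax vmin vmax α β vmin := by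
  have hbdd : BddBelow {t : ℝ | 0 ≤ t ∧ ∃ x v u : ℝ → ℝ,
      AdmissibleDI umin umax vmin vmax α v0 x v u ∧ x t = β} :=
    ⟨0, fun t ht => ht.1⟩
  apply le_csInf hne
  rintro t ⟨ht0, x, v, w, ⟨hx0, hv0, hcond⟩, hxt⟩
  have hhc : Continuous h := continuous_iff_continuousAt.2 fun s => (hderiv s).continuousAt
  have hvc : ContinuousOn v (Icc 0 t) := fun s hs =>
    ((hcond s hs.1).2.1.continuousAt).continuousWithinAt
  -- v s ≤ vmin + umax * s on [0,t]
  have hvlin : ∀ s ∈ Icc (0:ℝ) t, v s ≤ vmin + umax * s := by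
    have hanti : AntitoneOn (fun s => v s - umax * s) (Icc 0 t) := by
      apply antitoneOn_of_deriv_nonpos (convex_Icc 0 t)
      · exact hvc.sub (continuous_const.mul continuous_id).continuousOn
      · intro y hy
        rw [interior_Icc] at hy
        have hd : HasDerivAt (fun s => v s - umax * s) (w y - umax) y := by
          exact ((hcond y hy.1.le).2.1.sub ((hasDerivAt_id' y).const_mul umax)).congr_deriv (by ring)
        exact hd.differentiableAt.differentiableWithinAt
      · intro y hy
        rw [interior_Icc] at hy
        have hd : HasDerivAt (fun s => v s - umax * s) (w y - umax) y := by
          exact ((hcond y hy.1.le).2.1.sub ((hasDerivAt_id' y).const_mul umax)).congr_deriv (by ring)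
        rw [hd.deriv]
        have := (hcond y hy.1.le).2.2.1.2
        linarith
    intro s hs
    have := hanti (left_mem_Icc.2 ht0) hs hs.1
    simp only [hv0, mul_zero, sub_zero] at this
    linarith
  -- pointwise v ≤ h on [0,t]
  have hvh : ∀ s ∈ Icc (0:ℝ) t, v s ≤ h s := fun s hs =>
    le_trans (le_min (hcond s hs.1).2.2.2.2 (hvlin s hs)) (hdom s hs.1)
  -- FTC for x
  have hxftc : ∫ s in (0:ℝ)..t, v s = x t - x 0 := by
    apply intervalIntegral.integral_eq_sub_of_hasDerivAt
    · intro s hs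
      rw [uIcc_of_le ht0] at hs
      exact (hcond s hs.1).1
    · rw [intervalIntegrable_iff_integrableOn_Icc_of_le ht0]
      exact hvc.integrableOn_Icc
  -- the dominating position trajectory
  set X : ℝ → ℝ := fun T => α + ∫ s in (0:ℝ)..T, h s with hXdef
  have hXd : ∀ T : ℝ, HasDerivAt X (h T) T := by
    intro T
    have hi : HasDerivAt (fun T => ∫ s in (0:ℝ)..T, h s) (h T) T :=
      intervalIntegral.integral_hasDerivAt_right (hhc.intervalIntegrable 0 T)
        (hhc.stronglyMeasurable.stronglyMeasurableAtFilter) hhc.continuousAt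
    simpa [hXdef] using hi.const_add α
  have hX0 : X 0 = α := by simp [hXdef]
  have hXt : β ≤ X t := by
    have hint1 : ∫ s in (0:ℝ)..t, v s ≤ ∫ s in (0:ℝ)..t, h s := by
      apply intervalIntegral.integral_mono_on ht0
      · rw [intervalIntegrable_iff_integrableOn_Icc_of_le ht0]
        exact hvc.integrableOn_Icc
      · exact hhc.intervalIntegrable 0 t
      · exact hvh
    have : x t - x 0 ≤ X t - α := by
      rw [hXdef]; simp only [add_sub_cancel_left]
      rw [← hxftc]
      exact hint1
    rw [hxt, hx0] at this
    linarith
  -- IVT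
  have hXc : ContinuousOn X (Icc 0 t) := fun s _ => (hXd s).continuousAt.continuousWithinAt
  have hβmem : β ∈ X '' Icc 0 t := by
    apply intermediate_value_Icc ht0 hXc
    exact ⟨by rw [hX0]; exact hαβ.le, hXt⟩
  obtain ⟨s, hs, hXs⟩ := hβmem
  refine le_trans (csInf_le hbdd ?_) hs.2
  exact ⟨hs.1, X, h, u, ⟨hX0, hh0, fun r hr =>
    ⟨hXd r, hderiv r, ⟨le_trans humin.le (hu r hr).1, (hu r hr).2⟩, hrange r hr⟩⟩, hXs⟩

open Asymptotics Filter in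
lemma posPartSq_hasDerivAt (y : ℝ) :
    HasDerivAt (fun z : ℝ => (max z 0) ^ 2) (2 * max y 0) y := by
  rcases lt_trichotomy y 0 with hy | hy | hy
  · have hev : (fun z : ℝ => (max z 0) ^ 2) =ᶠ[nhds y] (fun _ : ℝ => (0:ℝ)) := by
      filter_upwards [eventually_lt_nhds hy] with z hz
      simp [max_eq_right hz.le]
    have : HasDerivAt (fun _ : ℝ => (0:ℝ)) 0 y := hasDerivAt_const y 0
    have h2 := this.congr_of_eventuallyEq hev
    simpa [max_eq_right hy.le] using h2
  · subst hy
    rw [hasDerivAt_iff_isLittleO]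
    simp only [max_self, ne_eq, OfNat.ofNat_ne_zero, not_false_eq_true, zero_pow, sub_zero,
      max_eq_right (le_refl (0:ℝ)), mul_zero, smul_eq_mul]
    have h1 : (fun z : ℝ => (max z 0) ^ 2) =O[nhds 0] (fun z : ℝ => z * z) := by
      apply isBigO_of_le
      intro z
      simp only [norm_pow, Real.norm_eq_abs, norm_mul]
      rw [pow_two]
      rcases le_or_gt z 0 with h | h
      · rw [max_eq_right h]
        simpa using mul_self_nonneg |z|
      · rw [max_eq_left h.le]
    have h2 : (fun z : ℝ => z * z) =o[nhds (0:ℝ)] (fun z : ℝ => z) := by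
      have ha : (fun z : ℝ => z) =o[nhds (0:ℝ)] (fun _ => (1:ℝ)) := by
        rw [isLittleO_one_iff]
        exact Filter.tendsto_id
      have hb : (fun z : ℝ => z) =O[nhds (0:ℝ)] (fun z : ℝ => z) := isBigO_refl _ _
      simpa using ha.mul_isBigO hb
    exact (h1.trans_isLittleO h2).congr' (by filter_upwards with z; ring_nf) (by rfl)
  · have hev : (fun z : ℝ => (max z 0) ^ 2) =ᶠ[nhds y] (fun z : ℝ => z ^ 2) := by
      filter_upwards [eventually_gt_nhds hy] with z hz
      simp [max_eq_left hz.le]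
    have : HasDerivAt (fun z : ℝ => z ^ 2) (2 * y) y := by
      simpa using (hasDerivAt_pow 2 y)
    have h2 := this.congr_of_eventuallyEq hev
    simpa [max_eq_left hy.le] using h2

lemma max_shift_bounds (a d : ℝ) (hd : 0 ≤ d) :
    0 ≤ max (a + d) 0 - max a 0 ∧ max (a + d) 0 - max a 0 ≤ d := by
  constructor
  · have : max a 0 ≤ max (a + d) 0 := max_le_max (by linarith) le_rfl
    linarith
  · have h1 : a + d ≤ max a 0 + d := by have := le_max_left a 0; linarith
    have h2 : (0:ℝ) ≤ max a 0 + d := by have := le_max_right a 0; linarith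
    have := max_le h1 h2
    linarith

/-- The minimum crossing time is antitone in the initial speed: the minimum time
from initial speed v_min is at least the minimum time from any initial speed
v₀ ≥ v_min. -/
theorem stmt_15 (umin umax vmin vmax α β v0 : ℝ)
    (humin : umin < 0) (humax : 0 < umax) (hvmin : 0 < vmin) (hv : vmin ≤ vmax)
    (hαβ : α < β) (hv0 : vmin ≤ v0) (hv0' : v0 ≤ vmax)
    (hne : {t : ℝ | 0 ≤ t ∧ ∃ x v u : ℝ → ℝ,
      AdmissibleDI umin umax vmin vmax α vmin x v u ∧ x t = β}.Nonempty)
    (hne' : {t : ℝ | 0 ≤ t ∧ ∃ x v u : ℝ → ℝ,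
      AdmissibleDI umin umax vmin vmax α v0 x v u ∧ x t = β}.Nonempty) :
    minCrossTime umin umax vmin vmax α β v0 ≤
      minCrossTime umin umax vmin vmax α β vmin := by
  rcases eq_or_lt_of_le hv0 with heq | hlt
  · rw [← heq]
  rcases eq_or_lt_of_le hv0' with heq2 | hlt2
  · -- v0 = vmax : constant-speed trajectory
    apply key_compare umin umax vmin vmax α β v0 humin humax hvmin hαβ
      (fun _ => vmax) (fun _ => 0) heq2.symm
      (fun s => hasDerivAt_const s vmax)
      (fun s _ => ⟨le_rfl, humax.le⟩)
      (fun s _ => ⟨hv, le_rfl⟩)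
      (fun s _ => min_le_left _ _) hne
  · -- vmin < v0 < vmax : rounded bang trajectory
    set d : ℝ := min (2 * (v0 - vmin) / umax) (2 * (vmax - v0) / umax) with hddef
    have hd : 0 < d := by
      have h1 : 0 < v0 - vmin := by linarith
      have h2 : 0 < vmax - v0 := by linarith
      exact lt_min (by positivity) (by positivity)
    set s₁ : ℝ := (vmax - v0) / umax - d / 2 with hs₁def
    have hs₁ : 0 ≤ s₁ := by
      have hdle : d ≤ 2 * (vmax - v0) / umax := min_le_right _ _
      rw [mul_div_assoc] at hdle
      rw [hs₁def, sub_nonneg]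
      linarith
    have hd2 : umax * d ≤ 2 * (v0 - vmin) := by
      have hdle : d ≤ 2 * (v0 - vmin) / umax := min_le_left _ _
      have := mul_le_mul_of_nonneg_left hdle humax.le
      rwa [mul_div_cancel₀ _ humax.ne'] at this
    have hkey : umax * s₁ = vmax - v0 - umax * d / 2 := by
      rw [hs₁def]; field_simp
    clear_value d s₁
    set h : ℝ → ℝ :=
      fun s => vmax - umax / (2 * d) * ((max (s₁ + d - s) 0) ^ 2 - (max (s₁ - s) 0) ^ 2)
      with hhdef
    set u : ℝ → ℝ := fun s => umax / d * (max (s₁ + d - s) 0 - max (s₁ - s) 0) with hudef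
    -- derivative of h is u
    have hderiv : ∀ s : ℝ, HasDerivAt h (u s) s := by
      intro s
      have hin1 : HasDerivAt (fun y : ℝ => s₁ + d - y) (-1) s := by
        simpa using (hasDerivAt_id s).const_sub (s₁ + d)
      have hin2 : HasDerivAt (fun y : ℝ => s₁ - y) (-1) s := by
        simpa using (hasDerivAt_id s).const_sub s₁
      have hA : HasDerivAt (fun y : ℝ => (max (s₁ + d - y) 0) ^ 2)
          (2 * max (s₁ + d - s) 0 * (-1)) s :=
        (posPartSq_hasDerivAt (s₁ + d - s)).comp s hin1
      have hB : HasDerivAt (fun y : ℝ => (max (s₁ - y) 0) ^ 2)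
          (2 * max (s₁ - s) 0 * (-1)) s :=
        (posPartSq_hasDerivAt (s₁ - s)).comp s hin2
      have := ((hA.sub hB).const_mul (umax / (2 * d))).const_sub vmax
      refine this.congr_deriv ?_
      rw [hudef]
      field_simp
      ring
    -- bounds on u (for all s)
    have hubnd : ∀ s : ℝ, 0 ≤ u s ∧ u s ≤ umax := by
      intro s
      obtain ⟨hq0, hqd⟩ := max_shift_bounds (s₁ - s) d hd.le
      have heq : s₁ - s + d = s₁ + d - s := by ring
      rw [heq] at hq0 hqd
      constructor
      · rw [hudef]
        exact mul_nonneg (by positivity) hq0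
      · rw [hudef]
        calc umax / d * (max (s₁ + d - s) 0 - max (s₁ - s) 0) ≤ umax / d * d :=
              mul_le_mul_of_nonneg_left hqd (by positivity)
          _ = umax := div_mul_cancel₀ _ hd.ne'
    -- h 0 = v0
    have hh0 : h 0 = v0 := by
      rw [hhdef]
      simp only [sub_zero]
      rw [max_eq_left (by linarith), max_eq_left hs₁]
      have : (s₁ + d) ^ 2 - s₁ ^ 2 = d * (2 * s₁ + d) := by ring
      rw [this]
      have hd' : (2 : ℝ) * d ≠ 0 := by positivity
      field_simp
      nlinarith [hkey]
    -- h is monotone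
    have hmono : Monotone h := by
      apply monotone_of_deriv_nonneg
      · exact fun s => (hderiv s).differentiableAt
      · intro s
        rw [(hderiv s).deriv]
        exact (hubnd s).1
    -- h ≤ vmax
    have hhle : ∀ s : ℝ, h s ≤ vmax := by
      intro s
      rw [hhdef]
      have hmx : max (s₁ - s) 0 ≤ max (s₁ + d - s) 0 := max_le_max (by linarith) le_rfl
      have hsq : (max (s₁ - s) 0) ^ 2 ≤ (max (s₁ + d - s) 0) ^ 2 :=
        pow_le_pow_left₀ (le_max_right _ _) hmx 2
      have hc : (0:ℝ) ≤ umax / (2 * d) := by positivity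
      nlinarith
    -- h = vmax past s₁ + d
    have hvmaxeq : ∀ s : ℝ, s₁ + d ≤ s → h s = vmax := by
      intro s hs
      simp only [hhdef]
      rw [max_eq_right (by linarith : s₁ + d - s ≤ 0), max_eq_right (by linarith : s₁ - s ≤ 0)]
      ring
    have hrange : ∀ s : ℝ, 0 ≤ s → h s ∈ Set.Icc vmin vmax := by
      intro s hs
      refine ⟨?_, hhle s⟩
      have := hmono hs
      rw [hh0] at this
      linarith
    -- domination
    have hdom : ∀ s : ℝ, 0 ≤ s → min vmax (vmin + umax * s) ≤ h s := by
      intro s hs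
      by_cases hcase : s ≤ s₁ + d
      · refine le_trans (min_le_right _ _) ?_
        have hA : Antitone (fun s => h s - umax * s) := by
          apply antitone_of_deriv_nonpos
          · exact fun y => ((hderiv y).sub ((hasDerivAt_id y).const_mul umax)).differentiableAt
          · intro y
            have hdy : HasDerivAt (fun s => h s - umax * s) (u y - umax) y := by
              exact ((hderiv y).sub ((hasDerivAt_id' y).const_mul umax)).congr_deriv (by ring)
            rw [hdy.deriv]
            linarith [(hubnd y).2]
        have := hA hcase
        simp only at this
        have hend : h (s₁ + d) = vmax := hvmaxeq (s₁ + d) le_rfl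
        rw [hend] at this
        -- vmax - umax*(s₁+d) ≤ h s - umax*s ; and vmin ≤ vmax - umax*(s₁+d)
        have hbnd : vmin ≤ vmax - umax * (s₁ + d) := by
          have hexp : umax * (s₁ + d) = umax * s₁ + umax * d := by ring
          linarith [hkey, hd2]
        nlinarith
      · push_neg at hcase
        rw [hvmaxeq s hcase.le]
        exact min_le_left _ _
    exact key_compare umin umax vmin vmax α β v0 humin humax hvmin hαβ h u hh0 hderiv
      (fun s hs => ⟨(hubnd s).1, (hubnd s).2⟩) hrange hdom hne
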